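/- Let f(x) = x^{2g+1} - b·x - (p·c)/4 ∈ ℤ[1/2][x] be a Mori trinomial. Then the reduction of f modulo p (well defined since p is odd, via ℤ[1/2]/pℤ[1/2] = 𝔽_p) equals x·(x^{2g} - b̄) in 𝔽_p[x], where b̄ = b mod p, and the degree-2g factor x^{2g} - b̄ is irreducible over 𝔽_p. -/

import Mathlib

open Polynomial

noncomputable section


open Finset

lemma geom_sum_odd {p d : ℕ} (hpodd : Odd p) (hdodd : Odd d) :
    Odd (∑ i ∈ range d, p ^ i) := by
  rw [Nat.odd_iff, Finset.sum_nat_mod]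
  have : ∀ i ∈ range d, p ^ i % 2 = 1 := fun i _ => Nat.odd_iff.mp (hpodd.pow)
  rw [Finset.sum_congr rfl this, Finset.sum_const, card_range, smul_eq_mul, mul_one]
  exact Nat.odd_iff.mp hdodd

lemma pow_sub_one_eq {p d : ℕ} (hp : 1 ≤ p) :
    p ^ d - 1 = (p - 1) * ∑ i ∈ range d, p ^ i := by
  have h1 : (1:ℕ) ≤ p ^ d := Nat.one_le_pow _ _ hp
  have h := geom_sum_mul (p : ℤ) d
  apply Nat.cast_injective (R := ℤ)
  push_cast [Nat.cast_sub hp, Nat.cast_sub h1]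
  linarith [h]

lemma aux_even_d {p d : ℕ} (hp : p.Prime) (hpodd : Odd p) (hd : d ≠ 0)
    (hdvd : 2 * (p - 1) ∣ p ^ d - 1) : Even d := by
  by_contra hdo
  rw [Nat.not_even_iff_odd] at hdo
  have hp1 : 1 < p := hp.one_lt
  have hS := geom_sum_odd hpodd hdo
  have heq := pow_sub_one_eq (d := d) hp1.le
  have hpd1 : p ^ d - 1 ≠ 0 := by
    have : 1 < p ^ d := Nat.one_lt_pow hd hp1
    omega
  have hpm1 : p - 1 ≠ 0 := by omega
  have hSne : (∑ i ∈ range d, p ^ i) ≠ 0 := by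
    have := Nat.odd_iff.mp hS; omega
  set v := (p - 1).factorization 2 with hv
  have hvd : 2 ^ (v + 1) ∣ p ^ d - 1 := by
    calc 2 ^ (v + 1) = 2 * 2 ^ v := by ring
    _ ∣ 2 * (p - 1) := mul_dvd_mul_left 2 (Nat.ordProj_dvd _ _)
    _ ∣ p ^ d - 1 := hdvd
  have hfact : (p ^ d - 1).factorization 2 = v := by
    rw [heq, Nat.factorization_mul hpm1 hSne]
    have hnd : ¬ 2 ∣ (∑ i ∈ range d, p ^ i) := by
      rw [Nat.two_dvd_ne_zero]; exact Nat.odd_iff.mp hS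
    simp [Nat.factorization_eq_zero_of_not_dvd hnd]
    exact hv.symm
  have := (Nat.Prime.pow_dvd_iff_le_factorization Nat.prime_two hpd1).mp hvd
  omega

lemma aux_key {p n d : ℕ} (hp : p.Prime) (hpodd : Odd p) (hd : d ≠ 0)
    (hq : ∀ q : ℕ, q.Prime → q ∣ n → q ∣ p - 1) (h4 : 4 ∣ n → 4 ∣ p - 1)
    (hdvd : n * (p - 1) ∣ p ^ d - 1) : n ∣ d := by
  have hp1 : 1 < p := hp.one_lt
  have hp2 : p ≠ 2 := by rintro rfl; simp [Nat.odd_iff] at hpodd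
  have hpm1 : p - 1 ≠ 0 := by omega
  have hpd1 : p ^ d - 1 ≠ 0 := by
    have : 1 < p ^ d := Nat.one_lt_pow hd hp1
    omega
  have hn : n ≠ 0 := by
    rintro rfl; rw [zero_mul] at hdvd
    exact hpd1 (Nat.eq_zero_of_zero_dvd hdvd)
  have h2p : 2 ∣ p - 1 := by obtain ⟨k, hk⟩ := hpodd; omega
  rw [← Nat.factorization_le_iff_dvd hn hd]
  intro q
  rcases Nat.eq_zero_or_pos (n.factorization q) with h0 | hpos
  · simp [h0]
  have hq' : q.Prime := by
    by_contra hnp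
    rw [Nat.factorization_eq_zero_of_not_prime n hnp] at hpos; omega
  have hqn : q ∣ n := Nat.dvd_of_factorization_pos (by omega)
  have hqp1 : q ∣ p - 1 := hq q hq' hqn
  have hqnotp : ¬ q ∣ p := by
    intro hcon
    have := Nat.dvd_sub hcon hqp1
    rw [Nat.sub_sub_self hp1.le] at this
    exact hq'.one_lt.ne' (Nat.dvd_one.mp this)
  have hineq : n.factorization q + (p - 1).factorization q ≤ (p ^ d - 1).factorization q := by
    have h := (Nat.factorization_le_iff_dvd (mul_ne_zero hn hpm1) hpd1).mpr hdvd q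
    rwa [Nat.factorization_mul hn hpm1, Finsupp.add_apply] at h
  haveI : Fact q.Prime := ⟨hq'⟩
  rcases eq_or_ne q 2 with rfl | hq2
  · -- q = 2
    have hdeven : Even d := aux_even_d hp hpodd hd
      (dvd_trans (mul_dvd_mul_right hqn (p-1)) hdvd)
    have hpodd' : ¬ 2 ∣ p := by
      have := Nat.odd_iff.mp hpodd; omega
    have h2d : (2:ℕ) ∣ d := hdeven.two_dvd
    by_cases h4p : 4 ∣ p - 1
    · have hlte2 := padicValNat.pow_two_sub_pow hp1 h2p hpodd' hd hdeven
      rw [one_pow] at hlte2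
      have hp1ne : p + 1 ≠ 0 := by omega
      have hpp1 : padicValNat 2 (p + 1) = 1 := by
        have hd1 : (2:ℕ)^1 ∣ p + 1 := by
          have := Nat.odd_iff.mp hpodd; omega
        have hd2 : ¬ (2:ℕ)^2 ∣ p + 1 := by
          intro hcon
          have : (4:ℕ) ∣ p + 1 := by norm_num at hcon; exact hcon
          omega
        have l1 := (Nat.Prime.pow_dvd_iff_le_factorization Nat.prime_two hp1ne).mp hd1
        have l2 : (p + 1).factorization 2 < 2 := by
          by_contra hle
          exact hd2 ((Nat.Prime.pow_dvd_iff_le_factorization Nat.prime_two hp1ne).mpr (by omega))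
        rw [Nat.factorization_def _ Nat.prime_two] at l1 l2
        omega
      have hconv : ∀ m : ℕ, m.factorization 2 = padicValNat 2 m :=
        fun m => Nat.factorization_def m Nat.prime_two
      simp only [hconv] at hineq ⊢
      omega
    · have hn4 : ¬ (4:ℕ) ∣ n := fun hcon => h4p (h4 hcon)
      have l1 : n.factorization 2 ≤ 1 := by
        by_contra hcon
        exact hn4 (by
          have : (2:ℕ)^2 ∣ n := (Nat.Prime.pow_dvd_iff_le_factorization Nat.prime_two hn).mpr (by omega)
          norm_num at this; exact this)
      have l2 : 1 ≤ d.factorization 2 :=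
        (Nat.Prime.pow_dvd_iff_le_factorization Nat.prime_two hd).mp (by simpa using h2d)
      omega
  · -- q odd
    have hqodd : Odd q := hq'.odd_of_ne_two hq2
    have hlte := padicValNat.pow_sub_pow (p := q) hqodd hp1 hqp1 hqnotp hd
    rw [one_pow] at hlte
    have hconv : ∀ m : ℕ, m.factorization q = padicValNat q m :=
      fun m => Nat.factorization_def m hq'
    simp only [hconv] at hineq ⊢
    omega


lemma X_pow_sub_C_irreducible_finite {p : ℕ} [hpf : Fact p.Prime] (hpodd : Odd p) {n : ℕ} (hn : 0 < n)
    {a : ZMod p} (hord : orderOf a = p - 1)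
    (hq : ∀ q : ℕ, q.Prime → q ∣ n → q ∣ p - 1) (h4 : 4 ∣ n → 4 ∣ p - 1) :
    Irreducible (X ^ n - C a : (ZMod p)[X]) := by
  classical
  have hp : p.Prime := hpf.out
  have hp3 : 2 < p := lt_of_le_of_ne hp.two_le (by rintro rfl; simp [Nat.odd_iff] at hpodd)
  have hfne : (X ^ n - C a : (ZMod p)[X]) ≠ 0 := X_pow_sub_C_ne_zero hn a
  have hnotunit : ¬ IsUnit (X ^ n - C a : (ZMod p)[X]) := by
    rw [Polynomial.isUnit_iff_degree_eq_zero, degree_X_pow_sub_C hn, Nat.cast_eq_zero]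
    omega
  obtain ⟨f, hfirr, hfdvd⟩ := WfDvdMonoid.exists_irreducible_factor hnotunit hfne
  suffices hdeg : f.natDegree = n by
    exact (associated_of_dvd_of_natDegree_le hfdvd hfne
      (natDegree_X_pow_sub_C.trans hdeg.symm).le).irreducible hfirr
  haveI : Fact (Irreducible f) := ⟨hfirr⟩
  set E := AdjoinRoot f with hE
  haveI : Module.Finite (ZMod p) E := (AdjoinRoot.powerBasis hfirr.ne_zero).finite
  haveI : Finite E := Module.finite_of_finite (ZMod p)
  haveI : Fintype E := Fintype.ofFinite E
  set d := f.natDegree with hd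
  have hdne : d ≠ 0 := hfirr.natDegree_pos.ne'
  have hcard : Fintype.card E = p ^ d := by
    rw [Module.card_eq_pow_finrank (K := ZMod p) (V := E), ZMod.card]
    congr 1
    rw [(AdjoinRoot.powerBasis hfirr.ne_zero).finrank]
    rfl
  set α := AdjoinRoot.root f with hα
  have hroot : α ^ n = algebraMap (ZMod p) E a := by
    have h0 := eval₂_eq_zero_of_dvd_of_eval₂_eq_zero (AdjoinRoot.of f) α hfdvd
      (AdjoinRoot.eval₂_root f)
    rw [eval₂_sub, eval₂_pow, eval₂_C, eval₂_X, sub_eq_zero] at h0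
    rw [h0, AdjoinRoot.algebraMap_eq]
  have hane : a ≠ 0 := by
    rintro rfl
    have h1 : (0:ZMod p) ^ (p-1) = 1 := by rw [← hord]; exact pow_orderOf_eq_one 0
    rw [zero_pow (by omega : p - 1 ≠ 0)] at h1
    exact zero_ne_one h1
  have hbne : algebraMap (ZMod p) E a ≠ 0 := by
    simpa using (map_ne_zero_iff _ (algebraMap (ZMod p) E).injective).mpr hane
  have hαne : α ≠ 0 := by
    intro h0
    rw [h0, zero_pow hn.ne'] at hroot
    exact hbne hroot.symm
  have hβ : orderOf (algebraMap (ZMod p) E a) = p - 1 := by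
    have h0 := orderOf_injective ((algebraMap (ZMod p) E) : ZMod p →* E)
      (algebraMap (ZMod p) E).injective a
    rw [hord] at h0
    simpa using h0
  set u : Eˣ := Units.mk0 α hαne with hu
  set w : Eˣ := Units.mk0 (algebraMap (ZMod p) E a) hbne with hw
  have huw : u ^ n = w := by
    ext
    push_cast [hu, hw]
    exact hroot
  have hworder : orderOf w = p - 1 := by
    have h1 : orderOf ((w : E)) = orderOf w := orderOf_units
    rw [← hβ, ← h1]
    rfl
  set m := orderOf u with hm
  have hm0 : m ≠ 0 := (orderOf_pos u).ne'
  have hpow : orderOf (u ^ n) = m / Nat.gcd m n := orderOf_pow u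
  rw [huw, hworder] at hpow
  set t := Nat.gcd m n with ht
  have htm : t ∣ m := Nat.gcd_dvd_left m n
  have htn : t ∣ n := Nat.gcd_dvd_right m n
  have ht0 : t ≠ 0 := fun h0 => hm0 (by
    have := Nat.gcd_eq_zero_iff.mp (ht ▸ h0); exact this.1)
  have hmt : m = (p - 1) * t := by
    have h1 : t * (m / t) = m := Nat.mul_div_cancel' htm
    rw [← hpow] at h1
    rw [← h1]; ring
  have htEq : t = n := by
    by_contra hne
    have h1 : n / t ≠ 1 := by
      intro h1
      apply hne
      have h2 := Nat.mul_div_cancel' htn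
      rw [h1, mul_one] at h2
      exact h2
    obtain ⟨q, hqp, hqd⟩ := Nat.exists_prime_and_dvd h1
    have hqn : q ∣ n := hqd.trans (Nat.div_dvd_of_dvd htn)
    have hqp1 : q ∣ p - 1 := hq q hqp hqn
    have h2 : q * t ∣ n := by
      obtain ⟨s, hs⟩ := hqd
      exact ⟨s, by rw [← Nat.mul_div_cancel' htn, hs]; ring⟩
    have h3 : q * t ∣ m := by rw [hmt]; exact mul_dvd_mul hqp1 dvd_rfl
    have h4' : q * t ∣ t := Nat.dvd_gcd h3 h2
    have h5 := Nat.le_of_dvd (by omega) h4'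
    have h6 : 2 * t ≤ q * t := Nat.mul_le_mul_right t hqp.two_le
    omega
  have hdvdcard : m ∣ p ^ d - 1 := by
    have h0 := orderOf_dvd_card (x := u)
    rwa [Fintype.card_units, hcard] at h0
  have hnd : n ∣ d := by
    refine aux_key hp hpodd hdne hq h4 ?_
    rw [mul_comm]
    rw [hmt, htEq] at hdvdcard
    exact hdvdcard
  have hdn : d ≤ n := by
    have := natDegree_le_of_dvd hfdvd hfne
    rwa [natDegree_X_pow_sub_C] at this
  exact le_antisymm hdn (Nat.le_of_dvd (by omega) hnd)


/-- `(g,p,b,c)` is a Mori quadruple. -/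
def IsMoriQuadruple (g p : ℕ) (b c : ℤ) : Prop :=
  0 < g ∧ p.Prime ∧ Odd p ∧
    (∀ q : ℕ, q.Prime → q ∣ g → q ∣ (p - 1) / 2) ∧
    orderOf (b : ZMod p) = p - 1 ∧
    Odd c ∧ IsCoprime b c ∧ IsCoprime b (2 * (g : ℤ) + 1) ∧ IsCoprime c (g : ℤ)

/-- The reduction modulo `p` of the Mori trinomial `f = x^(2g+1) - b·x - (p·c)/4 ∈ ℤ[1/2][x]`:
since `p` is odd, `4` is invertible mod `p` and the constant term reduces to
`(p·c mod p)·(4 mod p)⁻¹`. -/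
def moriPolyMod (g p : ℕ) (b c : ℤ) (ℓ : ℕ) : (ZMod ℓ)[X] :=
  X ^ (2 * g + 1) - C (b : ZMod ℓ) * X
    - C ((p : ZMod ℓ) * (c : ZMod ℓ) * (4 : ZMod ℓ)⁻¹)

/-- Theorem (Mori): the reduction of a Mori trinomial modulo `p` equals `x·(x^(2g) - b̄)`
in `𝔽_p[x]`, and the degree-`2g` factor `x^(2g) - b̄` is irreducible over `𝔽_p`. -/
theorem mori_trinomial_reduction_mod_p
    (g p : ℕ) (b c : ℤ) (h : IsMoriQuadruple g p b c) :
    moriPolyMod g p b c p = X * (X ^ (2 * g) - C (b : ZMod p)) ∧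
    Irreducible (X ^ (2 * g) - C (b : ZMod p) : (ZMod p)[X]) := by
  obtain ⟨hg, hp, hpodd, hdiv, hord, -⟩ := h
  haveI : Fact p.Prime := ⟨hp⟩
  constructor
  · simp only [moriPolyMod, ZMod.natCast_self, zero_mul, map_zero, sub_zero]
    ring
  · refine X_pow_sub_C_irreducible_finite hpodd (by omega) hord ?_ ?_
    · intro q hq hqn
      rcases (Nat.Prime.dvd_mul hq).mp hqn with h2 | hg'
      · have hq2 : q = 2 := (Nat.prime_dvd_prime_iff_eq hq Nat.prime_two).mp h2
        subst hq2
        obtain ⟨k, hk⟩ := hpodd; omega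
      · refine (hdiv q hq hg').trans (Nat.div_dvd_of_dvd ?_)
        obtain ⟨k, hk⟩ := hpodd; omega
    · intro h4
      have h2g : 2 ∣ g := by omega
      have hd2 := hdiv 2 Nat.prime_two h2g
      obtain ⟨k, hk⟩ := hpodd
      omega
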